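/- For every IFG formula φ, suitable structure 𝔄, and team V, it is not the case that V is both a winning team and a losing team for φ unless V is empty: if V is nonempty then not (𝔄 ⊨⁺ φ[V] and 𝔄 ⊨⁻ φ[V]). -/

import Mathlib

/-- Two valuations agree outside `J`: they take the same values on all coordinates not in `J`. -/
def AgreeOutside {ι A : Type*} (J : Set ι) (a b : ι → A) : Prop :=
  ∀ i, i ∉ J → a i = b i

/-- `𝒰` is a `J`-saturated disjoint cover of `V`. -/
def IsSatDisjCover {ι A : Type*} (J : Set ι) (V : Set (ι → A))
    (𝒰 : Set (Set (ι → A))) : Prop :=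
  ⋃₀ 𝒰 = V ∧ 𝒰.Pairwise Disjoint ∧
    ∀ a ∈ V, ∀ b ∈ V, AgreeOutside J a b → ∀ U ∈ 𝒰, a ∈ U → b ∈ U

/-- `V = V₁ ∪_J V₂`: a `J`-saturated disjoint (binary) cover of `V`. -/
def UnionJ {ι A : Type*} (J : Set ι) (V V₁ V₂ : Set (ι → A)) : Prop :=
  V₁ ∪ V₂ = V ∧ Disjoint V₁ V₂ ∧
    ∀ a ∈ V, ∀ b ∈ V, AgreeOutside J a b →
      ((a ∈ V₁ → b ∈ V₁) ∧ (a ∈ V₂ → b ∈ V₂))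

/-- `f : V → A` is independent of `J`. -/
def IndepOf {ι A : Type*} (J : Set ι) (V : Set (ι → A)) (f : (ι → A) → A) : Prop :=
  ∀ a ∈ V, ∀ b ∈ V, AgreeOutside J a b → f a = f b

/-- `V(n:f) = { ⃗a(n : f ⃗a) : ⃗a ∈ V }`. -/
def teamUpd {ι A : Type*} [DecidableEq ι] (n : ι) (f : (ι → A) → A)
    (V : Set (ι → A)) : Set (ι → A) :=
  (fun a => Function.update a n (f a)) '' V

/-- `V(n:A) = { ⃗a(n : c) : ⃗a ∈ V, c ∈ A }`. -/
def teamExp {ι A : Type*} [DecidableEq ι] (n : ι) (V : Set (ι → A)) : Set (ι → A) :=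
  {x | ∃ a ∈ V, ∃ c : A, x = Function.update a n c}

/-- IFG formulas over an abstract supply of atomic formulas (given as predicates on
valuations), built by negation `∼`, slashed disjunction `∨_J`, and slashed
existential quantification `∃ v_n / J`. -/
inductive IFG (ι A : Type*) where
  | atom : ((ι → A) → Prop) → IFG ι A
  | not : IFG ι A → IFG ι A
  | or : Set ι → IFG ι A → IFG ι A → IFG ι A
  | ex : ι → Set ι → IFG ι A → IFG ι A

/-- Trump semantics: `Sat φ true V` means `𝔄 ⊨⁺ φ[V]` and `Sat φ false V` means
`𝔄 ⊨⁻ φ[V]`. -/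
def Sat {ι A : Type*} [DecidableEq ι] : IFG ι A → Bool → Set (ι → A) → Prop
  | .atom P, true, V => ∀ a ∈ V, P a
  | .atom P, false, V => ∀ a ∈ V, ¬ P a
  | .not ψ, b, V => Sat ψ (!b) V
  | .or J ψ₁ ψ₂, true, V =>
      ∃ V₁ V₂, UnionJ J V V₁ V₂ ∧ Sat ψ₁ true V₁ ∧ Sat ψ₂ true V₂
  | .or J ψ₁ ψ₂, false, V => Sat ψ₁ false V ∧ Sat ψ₂ false V
  | .ex n J ψ, true, V => ∃ f, IndepOf J V f ∧ Sat ψ true (teamUpd n f V)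
  | .ex n J ψ, false, V => Sat ψ false (teamExp n V)


theorem Sat.mono {ι A : Type*} [DecidableEq ι] (φ : IFG ι A) (b : Bool)
    {V W : Set (ι → A)} (hWV : W ⊆ V) (h : Sat φ b V) : Sat φ b W := by
  induction φ generalizing b V W with
  | atom P =>
    cases b <;> exact fun a ha => h a (hWV ha)
  | not ψ ih => exact ih _ hWV h
  | or J ψ₁ ψ₂ ih₁ ih₂ =>
    cases b with
    | false => exact ⟨ih₁ _ hWV h.1, ih₂ _ hWV h.2⟩
    | true =>
      obtain ⟨V₁, V₂, ⟨hcov, hdis, hsat⟩, h₁, h₂⟩ := h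
      refine ⟨V₁ ∩ W, V₂ ∩ W, ⟨?_, ?_, ?_⟩, ih₁ _ Set.inter_subset_left h₁,
        ih₂ _ Set.inter_subset_left h₂⟩
      · rw [← Set.union_inter_distrib_right, hcov, Set.inter_eq_right.2 hWV]
      · exact (hdis.mono Set.inter_subset_left Set.inter_subset_left)
      · intro a ha b hb hab
        have := hsat a (hWV ha) b (hWV hb) hab
        exact ⟨fun h' => ⟨this.1 h'.1, hb⟩, fun h' => ⟨this.2 h'.1, hb⟩⟩
  | ex n J ψ ih =>
    cases b with
    | true =>
      obtain ⟨f, hf, hψ⟩ := h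
      exact ⟨f, fun a ha b hb hab => hf a (hWV ha) b (hWV hb) hab,
        ih _ (Set.image_mono hWV) hψ⟩
    | false =>
      refine ih _ ?_ h
      rintro x ⟨a, ha, c, rfl⟩
      exact ⟨a, hWV ha, c, rfl⟩

/-- Noncontradiction: a nonempty team cannot be both winning and losing for `φ`. -/
theorem not_sat_pos_and_neg {ι A : Type*} [DecidableEq ι] (φ : IFG ι A)
    (V : Set (ι → A)) (hV : V.Nonempty) :
    ¬ (Sat φ true V ∧ Sat φ false V) := by
  induction φ generalizing V with
  | atom P =>
    rintro ⟨hp, hn⟩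
    obtain ⟨a, ha⟩ := hV
    exact hn a ha (hp a ha)
  | not ψ ih =>
    rintro ⟨hp, hn⟩
    exact ih V hV ⟨hn, hp⟩
  | or J ψ₁ ψ₂ ih₁ ih₂ =>
    rintro ⟨⟨V₁, V₂, ⟨hcov, _, _⟩, h₁, h₂⟩, hn₁, hn₂⟩
    obtain ⟨a, ha⟩ := hV
    rw [← hcov] at ha
    rcases ha with ha | ha
    · exact ih₁ V₁ ⟨a, ha⟩ ⟨h₁, Sat.mono ψ₁ false (hcov ▸ Set.subset_union_left) hn₁⟩
    · exact ih₂ V₂ ⟨a, ha⟩ ⟨h₂, Sat.mono ψ₂ false (hcov ▸ Set.subset_union_right) hn₂⟩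
  | ex n J ψ ih =>
    rintro ⟨⟨f, _, hp⟩, hn⟩
    obtain ⟨a, ha⟩ := hV
    have hne : (teamUpd n f V).Nonempty := ⟨_, a, ha, rfl⟩
    have hsub : teamUpd n f V ⊆ teamExp n V := by
      rintro x ⟨b, hb, rfl⟩
      exact ⟨b, hb, f b, rfl⟩
    exact ih _ hne ⟨hp, Sat.mono ψ false hsub hn⟩
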